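/- Let G: [0, ∞) → [0, ∞) be injective, let μ be a probability measure on ℝ^d (the law of W), let φ₁, φ₂: ℝ^d → ℝ be μ-integrable with ∫ φ₁ dμ = ∫ φ₂ dμ = 0, and let Λ₁, Λ₂: [a, b] → [0, ∞) with Λ₁(t₀) > 0 for some t₀ ∈ [a, b]. If for every t ∈ [a, b] and μ-almost every w ∈ ℝ^d one has G(Λ₁(t) exp(φ₁(w))) = G(Λ₂(t) exp(φ₂(w))), then φ₁ = φ₂ μ-almost everywhere and Λ₁(t) = Λ₂(t) for all t ∈ [a, b]. -/

import Mathlib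

open MeasureTheory Set

/-- Identifiability of `(Λ, φ)` under the normalization `E{φ(W)} = 0`: if `G` is
injective on `[0,∞)`, `φ₁, φ₂` are `μ`-integrable with mean zero, `Λ₁, Λ₂ : [a,b] → [0,∞)`
with `Λ₁(t₀) > 0` for some `t₀ ∈ [a,b]`, and for every `t ∈ [a,b]` one has
`G(Λ₁(t)e^{φ₁(w)}) = G(Λ₂(t)e^{φ₂(w)})` for `μ`-a.e. `w`, then `φ₁ = φ₂` `μ`-a.e. and
`Λ₁ = Λ₂` on `[a,b]`. -/
theorem identifiability_of_phi_and_Lambda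
    {d : ℕ} (μ : Measure (Fin d → ℝ)) [IsProbabilityMeasure μ]
    (G : ℝ → ℝ) (hGinj : Set.InjOn G (Ici 0))
    (φ₁ φ₂ : (Fin d → ℝ) → ℝ)
    (hφ₁int : Integrable φ₁ μ) (hφ₂int : Integrable φ₂ μ)
    (hφ₁mean : ∫ w, φ₁ w ∂μ = 0) (hφ₂mean : ∫ w, φ₂ w ∂μ = 0)
    (a b : ℝ) (Λ₁ Λ₂ : ℝ → ℝ)
    (hΛ₁ : ∀ t ∈ Icc a b, 0 ≤ Λ₁ t) (hΛ₂ : ∀ t ∈ Icc a b, 0 ≤ Λ₂ t)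
    (ht₀ : ∃ t₀ ∈ Icc a b, 0 < Λ₁ t₀)
    (heq : ∀ t ∈ Icc a b, ∀ᵐ w ∂μ,
      G (Λ₁ t * Real.exp (φ₁ w)) = G (Λ₂ t * Real.exp (φ₂ w))) :
    φ₁ =ᵐ[μ] φ₂ ∧ ∀ t ∈ Icc a b, Λ₁ t = Λ₂ t := by
  have heq' : ∀ t ∈ Icc a b, ∀ᵐ w ∂μ,
      Λ₁ t * Real.exp (φ₁ w) = Λ₂ t * Real.exp (φ₂ w) := by
    intro t ht
    filter_upwards [heq t ht] with w hw
    exact hGinj (mul_nonneg (hΛ₁ t ht) (Real.exp_pos _).le)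
      (mul_nonneg (hΛ₂ t ht) (Real.exp_pos _).le) hw
  obtain ⟨t₀, ht₀m, ht₀pos⟩ := ht₀
  have h0 := heq' t₀ ht₀m
  -- Λ₂ t₀ > 0
  obtain ⟨w₀, hw₀⟩ := h0.exists
  have hΛ₂pos : 0 < Λ₂ t₀ := by
    have h : 0 < Λ₂ t₀ * Real.exp (φ₂ w₀) := by
      rw [← hw₀]; positivity
    nlinarith [Real.exp_pos (φ₂ w₀)]
  set c : ℝ := Real.log (Λ₂ t₀) - Real.log (Λ₁ t₀) with hc
  have hae : ∀ᵐ w ∂μ, φ₁ w = φ₂ w + c := by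
    filter_upwards [h0] with w hw
    have := congrArg Real.log hw
    rw [Real.log_mul ht₀pos.ne' (Real.exp_pos _).ne',
      Real.log_mul hΛ₂pos.ne' (Real.exp_pos _).ne',
      Real.log_exp, Real.log_exp] at this
    rw [hc]; linarith
  have hint : ∫ w, φ₁ w ∂μ = ∫ w, (φ₂ w + c) ∂μ := integral_congr_ae hae
  rw [integral_add hφ₂int (integrable_const c), hφ₂mean, integral_const,
    probReal_univ, one_smul, hφ₁mean, zero_add] at hint
  have hc0 : c = 0 := hint.symm
  have hΛeq₀ : Λ₁ t₀ = Λ₂ t₀ := by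
    have : Real.log (Λ₁ t₀) = Real.log (Λ₂ t₀) := by rw [hc] at hc0; linarith
    exact Real.log_injOn_pos (mem_Ioi.mpr ht₀pos) (mem_Ioi.mpr hΛ₂pos) this
  have hphi : φ₁ =ᵐ[μ] φ₂ := by
    filter_upwards [hae] with w hw
    rw [hw, hc0, add_zero]
  refine ⟨hphi, fun t ht => ?_⟩
  obtain ⟨w, hw1, hw2⟩ := ((heq' t ht).and hphi).exists
  rw [hw2] at hw1
  exact mul_right_cancel₀ (Real.exp_pos _).ne' hw1
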